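/- Let u ≥ v ≥ 1 be integers and n a natural number. If v ≥ 2, then μ(𝒯^{(u,v)}(2n+2)) equals the (1,1) entry of the matrix (R_v L_u)^{n+1}. If v = 1, then μ(𝒯^{(u,1)}(2n+2)) equals the (2,1) entry of the matrix L_u (L_u R_1)^n L_u. -/

import Mathlib

open Matrix Finset

def Lm (u : ℕ) : Matrix (Fin 2) (Fin 2) ℕ := !![1, 0; u, 1]
def Rm (v : ℕ) : Matrix (Fin 2) (Fin 2) ℕ := !![1, v; 0, 1]

/-- The product of the matrices corresponding to a word: `false ↦ L_u`, `true ↦ R_v`. -/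
def wordProd (u v : ℕ) (w : List Bool) : Matrix (Fin 2) (Fin 2) ℕ :=
  (w.map (fun b => if b then Rm v else Lm u)).prod

/-- μ of a matrix: maximum of the four entries. -/
def matMax (M : Matrix (Fin 2) (Fin 2) ℕ) : ℕ :=
  max (max (M 0 0) (M 0 1)) (max (M 1 0) (M 1 1))

/-- μ(𝒯^{(u,v)}(I₂;n)): maximum of μ over all products of exactly n matrices each L_u or R_v. -/
def levelMax (u v n : ℕ) : ℕ :=
  Finset.univ.sup (fun w : Fin n → Bool => matMax (wordProd u v (List.ofFn w)))

/-- the DP pair (A_j, B_j). -/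
def AB (u v : ℕ) : ℕ → ℕ × ℕ
  | 0 => (1, 1)
  | 1 => (u, v)
  | (j+2) =>
    let p := AB u v j
    let q := AB u v (j+1)
    (max (q.1 + u * p.2) (u * q.2 + p.1), max (q.2 + v * p.1) (v * q.1 + p.2))

def fA (u v j : ℕ) : ℕ := (AB u v j).1
def fB (u v j : ℕ) : ℕ := (AB u v j).2

lemma fA_zero (u v : ℕ) : fA u v 0 = 1 := rfl
lemma fB_zero (u v : ℕ) : fB u v 0 = 1 := rfl
lemma fA_one (u v : ℕ) : fA u v 1 = u := rfl
lemma fB_one (u v : ℕ) : fB u v 1 = v := rfl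

lemma fA_step (u v j : ℕ) :
    fA u v (j+2) = max (fA u v (j+1) + u * fB u v j) (u * fB u v (j+1) + fA u v j) := by
  simp [fA, fB, AB]

lemma fB_step (u v j : ℕ) :
    fB u v (j+2) = max (fB u v (j+1) + v * fA u v j) (v * fA u v (j+1) + fB u v j) := by
  simp [fA, fB, AB]

section Ineq
variable {u v : ℕ} (hv : 1 ≤ v) (huv : v ≤ u)

include hv huv

lemma fA_mono_succ : ∀ j, fA u v j ≤ fA u v (j+1) := by
  intro j
  match j with
  | 0 => simpa [fA_zero, fA_one] using hv.trans huv
  | (j+1) =>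
    rw [fA_step]
    exact le_max_of_le_left (Nat.le_add_right _ _)

lemma fB_mono_succ : ∀ j, fB u v j ≤ fB u v (j+1) := by
  intro j
  match j with
  | 0 => simpa [fB_zero, fB_one] using hv
  | (j+1) =>
    rw [fB_step]
    exact le_max_of_le_left (Nat.le_add_right _ _)

lemma fA_mono : Monotone (fA u v) :=
  monotone_nat_of_le_succ (fA_mono_succ hv huv)

lemma fB_mono : Monotone (fB u v) :=
  monotone_nat_of_le_succ (fB_mono_succ hv huv)

lemma fB_le_fA_aux : ∀ j, (fB u v j ≤ fA u v j ∧ v * fA u v j ≤ u * fB u v j) ∧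
    (fB u v (j+1) ≤ fA u v (j+1) ∧ v * fA u v (j+1) ≤ u * fB u v (j+1)) := by
  intro j
  induction j with
  | zero =>
    refine ⟨⟨le_refl _, ?_⟩, ⟨?_, ?_⟩⟩
    · simpa [fA_zero, fB_zero] using huv
    · simpa [fA_one, fB_one] using huv
    · simp [fA_one, fB_one, Nat.mul_comm]
  | succ j ih =>
    obtain ⟨⟨h1, h2⟩, h3, h4⟩ := ih
    refine ⟨⟨h3, h4⟩, ?_, ?_⟩
    · rw [fA_step, fB_step]
      apply max_le
      · exact le_max_of_le_left (Nat.add_le_add h3 h2)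
      · exact le_max_of_le_right (Nat.add_le_add h4 h1)
    · rw [fA_step, fB_step, ← Nat.mul_max_mul_left, ← Nat.mul_max_mul_left]
      apply max_le
      · refine le_max_of_le_left ?_
        rw [Nat.mul_add, Nat.mul_add]
        refine Nat.add_le_add h4 ?_
        calc v * (u * fB u v j) = u * (v * fB u v j) := by ring
          _ ≤ u * (v * fA u v j) := by gcongr
      · refine le_max_of_le_right ?_
        rw [Nat.mul_add, Nat.mul_add]
        refine Nat.add_le_add ?_ h2
        calc v * (u * fB u v (j+1)) = u * (v * fB u v (j+1)) := by ring
          _ ≤ u * (v * fA u v (j+1)) := by gcongr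

lemma fB_le_fA (j : ℕ) : fB u v j ≤ fA u v j := ((fB_le_fA_aux hv huv) j).1.1

lemma v_fA_le_u_fB (j : ℕ) : v * fA u v j ≤ u * fB u v j := ((fB_le_fA_aux hv huv) j).1.2

end Ineq

lemma wordProd_nil (u v : ℕ) : wordProd u v [] = 1 := rfl

lemma wordProd_cons (u v : ℕ) (b : Bool) (w : List Bool) :
    wordProd u v (b :: w) = (if b then Rm v else Lm u) * wordProd u v w := by
  simp [wordProd]

lemma Lm_mul_apply_zero (u : ℕ) (M : Matrix (Fin 2) (Fin 2) ℕ) (j : Fin 2) :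
    (Lm u * M) 0 j = M 0 j := by
  simp [Lm, Matrix.mul_apply, Fin.sum_univ_two]

lemma Lm_mul_apply_one (u : ℕ) (M : Matrix (Fin 2) (Fin 2) ℕ) (j : Fin 2) :
    (Lm u * M) 1 j = u * M 0 j + M 1 j := by
  simp [Lm, Matrix.mul_apply, Fin.sum_univ_two]

lemma Rm_mul_apply_zero (v : ℕ) (M : Matrix (Fin 2) (Fin 2) ℕ) (j : Fin 2) :
    (Rm v * M) 0 j = M 0 j + v * M 1 j := by
  simp [Rm, Matrix.mul_apply, Fin.sum_univ_two]

lemma Rm_mul_apply_one (v : ℕ) (M : Matrix (Fin 2) (Fin 2) ℕ) (j : Fin 2) :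
    (Rm v * M) 1 j = M 1 j := by
  simp [Rm, Matrix.mul_apply, Fin.sum_univ_two]

section Key
variable {u v : ℕ} (hv : 1 ≤ v) (huv : v ≤ u)
include hv huv

lemma key : ∀ (t : List Bool) (b : Bool),
    (b = false → (∀ j, wordProd u v (b :: t) 1 j ≤ fA u v (t.length + 1)) ∧
                 (∀ j, wordProd u v (b :: t) 0 j ≤ fB u v t.length)) ∧
    (b = true → (∀ j, wordProd u v (b :: t) 0 j ≤ fB u v (t.length + 1)) ∧
                (∀ j, wordProd u v (b :: t) 1 j ≤ fA u v t.length)) := by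
  intro t
  induction t with
  | nil =>
    intro b
    constructor
    · rintro rfl
      rw [wordProd_cons]
      simp only [if_neg Bool.false_ne_true, List.length_nil, wordProd_nil, mul_one]
      constructor
      · intro j
        fin_cases j <;>
          simp [Lm, fA_one] <;> omega
      · intro j
        fin_cases j <;> simp [Lm, fB_zero]
    · rintro rfl
      rw [wordProd_cons]
      rw [if_pos rfl, wordProd_nil, mul_one]
      simp only [List.length_nil]
      constructor
      · intro j
        fin_cases j <;> simp [Rm, fB_one] <;> omega
      · intro j
        fin_cases j <;> simp [Rm, fA_zero]
  | cons c t ih =>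
    intro b
    have hlen : (c :: t).length = t.length + 1 := rfl
    set ℓ := t.length with hℓ
    have IH := ih c
    constructor
    · rintro rfl
      rw [wordProd_cons]
      simp only [if_neg Bool.false_ne_true]
      cases c with
      | false =>
        obtain ⟨hD, hO⟩ := IH.1 rfl
        constructor
        · intro j
          rw [Lm_mul_apply_one]
          calc u * wordProd u v (false :: t) 0 j + wordProd u v (false :: t) 1 j
              ≤ u * fB u v ℓ + fA u v (ℓ + 1) := Nat.add_le_add (by gcongr; exact hO j) (hD j)
            _ = fA u v (ℓ + 1) + u * fB u v ℓ := by ring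
            _ ≤ fA u v (ℓ + 2) := by rw [fA_step]; exact le_max_left _ _
        · intro j
          rw [Lm_mul_apply_zero]
          exact (hO j).trans (fB_mono_succ hv huv ℓ)
      | true =>
        obtain ⟨hD, hO⟩ := IH.2 rfl
        constructor
        · intro j
          rw [Lm_mul_apply_one]
          calc u * wordProd u v (true :: t) 0 j + wordProd u v (true :: t) 1 j
              ≤ u * fB u v (ℓ + 1) + fA u v ℓ := Nat.add_le_add (by gcongr; exact hD j) (hO j)
            _ ≤ fA u v (ℓ + 2) := by rw [fA_step]; exact le_max_right _ _
        · intro j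
          rw [Lm_mul_apply_zero]
          exact hD j
    · rintro rfl
      rw [wordProd_cons]
      rw [if_pos rfl]
      cases c with
      | true =>
        obtain ⟨hD, hO⟩ := IH.2 rfl
        constructor
        · intro j
          rw [Rm_mul_apply_zero]
          calc wordProd u v (true :: t) 0 j + v * wordProd u v (true :: t) 1 j
              ≤ fB u v (ℓ + 1) + v * fA u v ℓ := Nat.add_le_add (hD j) (by gcongr; exact hO j)
            _ ≤ fB u v (ℓ + 2) := by rw [fB_step]; exact le_max_left _ _
        · intro j
          rw [Rm_mul_apply_one]
          exact (hO j).trans (fA_mono_succ hv huv ℓ)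
      | false =>
        obtain ⟨hD, hO⟩ := IH.1 rfl
        constructor
        · intro j
          rw [Rm_mul_apply_zero]
          calc wordProd u v (false :: t) 0 j + v * wordProd u v (false :: t) 1 j
              ≤ fB u v ℓ + v * fA u v (ℓ + 1) := Nat.add_le_add (hO j) (by gcongr; exact hD j)
            _ = v * fA u v (ℓ + 1) + fB u v ℓ := by ring
            _ ≤ fB u v (ℓ + 2) := by rw [fB_step]; exact le_max_right _ _
        · intro j
          rw [Rm_mul_apply_one]
          exact hD j

/-- All entries of a nonempty word product are bounded by `fA` at the length. -/
lemma entry_le (w : List Bool) (hw : w ≠ []) (i j : Fin 2) :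
    wordProd u v w i j ≤ fA u v w.length := by
  obtain ⟨b, t, rfl⟩ := List.exists_cons_of_ne_nil hw
  have hlen : (b :: t).length = t.length + 1 := rfl
  cases b with
  | false =>
    obtain ⟨hD, hO⟩ := (key hv huv t false).1 rfl
    fin_cases i
    · exact (hO j).trans ((fB_le_fA hv huv _).trans (fA_mono hv huv (Nat.le_succ _)))
    · exact hD j
  | true =>
    obtain ⟨hD, hO⟩ := (key hv huv t true).2 rfl
    fin_cases i
    · exact (hD j).trans (fB_le_fA hv huv _)
    · exact (hO j).trans (fA_mono hv huv (Nat.le_succ _))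

lemma matMax_le (w : List Bool) (hw : w ≠ []) :
    matMax (wordProd u v w) ≤ fA u v w.length := by
  unfold matMax
  exact max_le (max_le (entry_le hv huv w hw 0 0) (entry_le hv huv w hw 0 1))
    (max_le (entry_le hv huv w hw 1 0) (entry_le hv huv w hw 1 1))

lemma levelMax_le (m : ℕ) (hm : 1 ≤ m) : levelMax u v m ≤ fA u v m := by
  unfold levelMax
  apply Finset.sup_le
  intro f _
  have h1 : (List.ofFn f).length = m := List.length_ofFn
  have h2 : (List.ofFn f) ≠ [] := by
    intro h
    rw [h] at h1
    simp at h1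
    omega
  simpa [h1] using matMax_le hv huv (List.ofFn f) h2

end Key

/-! ### The sequences x, s and closed forms -/

def xs (u v : ℕ) : ℕ → ℕ × ℕ
  | 0 => (1, 1)
  | (k+1) => let p := xs u v k; (u * v * p.2 + p.1, p.2 + (u * v * p.2 + p.1))

def xx (u v k : ℕ) : ℕ := (xs u v k).1
def ss (u v k : ℕ) : ℕ := (xs u v k).2

lemma xx_zero (u v : ℕ) : xx u v 0 = 1 := rfl
lemma ss_zero (u v : ℕ) : ss u v 0 = 1 := rfl
lemma xx_succ (u v k : ℕ) : xx u v (k+1) = u * v * ss u v k + xx u v k := rfl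
lemma ss_succ (u v k : ℕ) : ss u v (k+1) = ss u v k + xx u v (k+1) := rfl

lemma one_le_xx (u v k : ℕ) : 1 ≤ xx u v k := by
  induction k with
  | zero => simp [xx_zero]
  | succ k ih => rw [xx_succ]; omega

lemma xx_le_ss (u v k : ℕ) : xx u v k ≤ ss u v k := by
  cases k with
  | zero => simp [xx_zero, ss_zero]
  | succ k => rw [ss_succ]; omega

/-- powers of R·L in terms of x and s -/
lemma RL_pow (u v : ℕ) : ∀ k, (Rm v * Lm u) ^ (k+1) =
    !![xx u v (k+1), v * ss u v k; u * ss u v k, xx u v k] := by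
  intro k
  induction k with
  | zero =>
    rw [pow_one]
    ext i j
    fin_cases i <;> fin_cases j <;>
      simp [Rm, Lm, Matrix.mul_apply, Fin.sum_univ_two, xx_succ, xx_zero, ss_zero] <;> ring
  | succ k ih =>
    rw [pow_succ', ih, mul_assoc]
    ext i j
    fin_cases i <;> fin_cases j <;>
      · simp only [Rm, Lm, Matrix.mul_apply, Fin.sum_univ_two]
        simp [xx_succ, ss_succ]
        ring

/-- closed form of the DP for v ≥ 2 -/
lemma cf2 {u v : ℕ} (hv : 2 ≤ v) (huv : v ≤ u) : ∀ k,
    fA u v (2*k) = xx u v k ∧ fB u v (2*k) = xx u v k ∧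
    fA u v (2*k+1) = u * ss u v k ∧ fB u v (2*k+1) = v * ss u v k := by
  have hu : 2 ≤ u := hv.trans huv
  intro k
  induction k with
  | zero =>
    refine ⟨rfl, rfl, ?_, ?_⟩ <;> simp [fA_one, fB_one, ss_zero]
  | succ k ih =>
    obtain ⟨hA, hB, hA', hB'⟩ := ih
    have e1 : 2*(k+1) = (2*k) + 2 := by ring
    have e2 : 2*(k+1)+1 = (2*k+1) + 2 := by ring
    have e3 : 2*k+1+1 = 2*(k+1) := by ring
    have hxs := xx_le_ss u v k
    have hx1 := one_le_xx u v k
    have hA2 : fA u v (2*(k+1)) = xx u v (k+1) := by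
      rw [e1, fA_step, hA, hA', hB, hB', xx_succ]
      rw [max_eq_right ?ineq]
      case ineq =>
        calc u * ss u v k + u * xx u v k ≤ u * ss u v k + u * ss u v k := by gcongr
          _ = 2 * (u * ss u v k) := by ring
          _ ≤ v * (u * ss u v k) := by gcongr
          _ = u * (v * ss u v k) := by ring
          _ ≤ u * (v * ss u v k) + xx u v k := Nat.le_add_right _ _
      ring
    have hB2 : fB u v (2*(k+1)) = xx u v (k+1) := by
      rw [e1, fB_step, hA, hA', hB, hB', xx_succ]
      rw [max_eq_right ?ineq]
      case ineq =>
        calc v * ss u v k + v * xx u v k ≤ v * ss u v k + v * ss u v k := by gcongr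
          _ = 2 * (v * ss u v k) := by ring
          _ ≤ u * (v * ss u v k) := by gcongr
          _ = v * (u * ss u v k) := by ring
          _ ≤ v * (u * ss u v k) + xx u v k := Nat.le_add_right _ _
      ring
    have hA3 : fA u v (2*(k+1)+1) = u * ss u v (k+1) := by
      rw [e2, fA_step, e3, hA2, hB2, hA', hB', ss_succ, xx_succ]
      rw [max_eq_right ?ineq]
      case ineq =>
        calc u * v * ss u v k + xx u v k + u * (v * ss u v k)
            = 2 * (u * v * ss u v k) + xx u v k := by ring
          _ ≤ u * (u * v * ss u v k) + u * xx u v k := by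
              refine Nat.add_le_add (by gcongr) (Nat.le_mul_of_pos_left _ (by omega))
          _ ≤ u * (u * v * ss u v k) + u * xx u v k + u * ss u v k := Nat.le_add_right _ _
          _ = u * (u * v * ss u v k + xx u v k) + u * ss u v k := by ring
      ring
    have hB3 : fB u v (2*(k+1)+1) = v * ss u v (k+1) := by
      rw [e2, fB_step, e3, hA2, hB2, hA', hB', ss_succ, xx_succ]
      rw [max_eq_right ?ineq]
      case ineq =>
        calc u * v * ss u v k + xx u v k + v * (u * ss u v k)
            = 2 * (u * v * ss u v k) + xx u v k := by ring
          _ ≤ v * (u * v * ss u v k) + v * xx u v k := by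
              refine Nat.add_le_add (by gcongr) (Nat.le_mul_of_pos_left _ (by omega))
          _ ≤ v * (u * v * ss u v k) + v * xx u v k + v * ss u v k := Nat.le_add_right _ _
          _ = v * (u * v * ss u v k + xx u v k) + v * ss u v k := by ring
      ring
    exact ⟨hA2, hB2, hA3, hB3⟩

/-! ### closed form for v = 1 -/

def qb (u : ℕ) : ℕ → ℕ
  | 0 => 1
  | (k+1) => xx u 1 (k+1) + u * ss u 1 k

lemma qb_add (u : ℕ) (hu : 1 ≤ u) : ∀ k, qb u k + u * xx u 1 k = xx u 1 (k+1) := by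
  intro k
  cases k with
  | zero => simp [qb, xx_zero, xx_succ, ss_zero]; ring
  | succ k =>
    show xx u 1 (k+1) + u * ss u 1 k + u * xx u 1 (k+1) = xx u 1 (k+2)
    rw [xx_succ u 1 (k+1), ss_succ]
    ring

lemma qb_le (u : ℕ) (hu : 1 ≤ u) : ∀ k, qb u k ≤ u * ss u 1 k := by
  intro k
  cases k with
  | zero => simpa [qb, ss_zero] using hu
  | succ k =>
    show xx u 1 (k+1) + u * ss u 1 k ≤ u * ss u 1 (k+1)
    rw [ss_succ, Nat.mul_add]
    have : xx u 1 (k+1) ≤ u * xx u 1 (k+1) := Nat.le_mul_of_pos_left _ (by omega)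
    omega

lemma cf1 {u : ℕ} (hu : 1 ≤ u) : ∀ k,
    fA u 1 (2*k+1) = u * ss u 1 k ∧ fA u 1 (2*k+2) = u * (xx u 1 k + ss u 1 k) ∧
    fB u 1 (2*k+1) = qb u k ∧ fB u 1 (2*k+2) = xx u 1 (k+1) := by
  intro k
  induction k with
  | zero =>
    refine ⟨by simp [fA_one, ss_zero], ?_, by simp [fB_one, qb], ?_⟩
    · show fA u 1 (0 + 2) = _
      rw [fA_step, fA_zero, fA_one, fB_zero, fB_one, xx_zero, ss_zero]
      omega
    · show fB u 1 (0 + 2) = _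
      rw [fB_step, fA_zero, fA_one, fB_zero, fB_one, xx_succ, xx_zero, ss_zero]
      have : 1 * 1 + 1 * 1 ≤ 1 * u + 1 := by omega
      rw [max_eq_right this]
      ring
  | succ k ih =>
    obtain ⟨hA', hA2, hB', hB2⟩ := ih
    have e1 : 2*(k+1)+1 = (2*k+1) + 2 := by ring
    have e2 : 2*(k+1)+2 = (2*k+2) + 2 := by ring
    have e3 : 2*k+1+1 = 2*k+2 := by ring
    have e4 : 2*k+2+1 = 2*(k+1)+1 := by ring
    have hq := qb_le u hu k
    have hx1 := one_le_xx u 1 k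
    have hxs := xx_le_ss u 1 k
    have hA3 : fA u 1 (2*(k+1)+1) = u * ss u 1 (k+1) := by
      rw [e1, fA_step, e3, hA2, hB2, hA', hB']
      rw [max_eq_right ?ineq]
      case ineq =>
        rw [← qb_add u hu k]
        calc u * (xx u 1 k + ss u 1 k) + u * qb u k
            = u * ss u 1 k + u * qb u k + u * xx u 1 k := by ring
          _ ≤ u * ss u 1 k + u * qb u k + u * (u * xx u 1 k) := by
              gcongr
              exact Nat.le_mul_of_pos_left _ (by omega)
          _ = u * (qb u k + u * xx u 1 k) + u * ss u 1 k := by ring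
      rw [ss_succ]
      ring
    have hB3 : fB u 1 (2*(k+1)+1) = qb u (k+1) := by
      rw [e1, fB_step, e3, hA2, hB2, hA', hB']
      have heq : 1 * (u * (xx u 1 k + ss u 1 k)) + qb u k
          = xx u 1 (k+1) + 1 * (u * ss u 1 k) := by
        rw [← qb_add u hu k]; ring
      rw [max_eq_left (le_of_eq heq)]
      show xx u 1 (k+1) + 1 * (u * ss u 1 k) = xx u 1 (k+1) + u * ss u 1 k
      ring
    have hA4 : fA u 1 (2*(k+1)+2) = u * (xx u 1 (k+1) + ss u 1 (k+1)) := by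
      rw [e2, fA_step, e4, hA3, hB3, hA2, hB2]
      have heq : u * ss u 1 (k+1) + u * xx u 1 (k+1)
          = u * qb u (k+1) + u * (xx u 1 k + ss u 1 k) := by
        show _ = u * (xx u 1 (k+1) + u * ss u 1 k) + u * (xx u 1 k + ss u 1 k)
        rw [ss_succ, xx_succ]
        ring
      rw [← heq, max_self]
      ring
    have hB4 : fB u 1 (2*(k+1)+2) = xx u 1 (k+2) := by
      rw [e2, fB_step, e4, hA3, hB3, hA2, hB2]
      rw [max_eq_right ?ineq]
      case ineq =>
        show xx u 1 (k+1) + u * ss u 1 k + 1 * (u * (xx u 1 k + ss u 1 k))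
            ≤ 1 * (u * ss u 1 (k+1)) + xx u 1 (k+1)
        rw [ss_succ, xx_succ]
        have h2 : u * ss u 1 k ≤ u * (u * ss u 1 k) := Nat.le_mul_of_pos_left _ (by omega)
        nlinarith [h2]
      rw [xx_succ u 1 (k+1), ss_succ]
      ring
    exact ⟨hA3, hA4, hB3, hB4⟩

/-! ### attainment -/

def altL : ℕ → List Bool
  | 0 => []
  | (k+1) => true :: false :: altL k

lemma altL_length : ∀ k, (altL k).length = 2 * k
  | 0 => rfl
  | (k+1) => by simp [altL, altL_length k]; ring

lemma altL_prod (u v : ℕ) : ∀ k, wordProd u v (altL k) = (Rm v * Lm u) ^ k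
  | 0 => by simp [altL, wordProd_nil]
  | (k+1) => by
    rw [altL, wordProd_cons, wordProd_cons, altL_prod u v k, pow_succ']
    simp [mul_assoc]

lemma pow_shift {M : Type*} [Monoid M] (a b : M) : ∀ n, (a * b) ^ n * a = a * (b * a) ^ n
  | 0 => by simp
  | (n+1) => by
    rw [pow_succ (a*b) n, mul_assoc ((a*b)^n) (a*b) a, mul_assoc a b a,
      ← mul_assoc ((a*b)^n) a (b*a), pow_shift a b n, mul_assoc, ← pow_succ]

lemma levelMax_ge (u v m : ℕ) (l : List Bool) (hl : l.length = m) :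
    matMax (wordProd u v l) ≤ levelMax u v m := by
  have h : List.ofFn (fun i : Fin m => l.get (Fin.cast hl.symm i)) = l := by
    subst hl
    exact List.ofFn_get l
  calc matMax (wordProd u v l)
      = matMax (wordProd u v (List.ofFn (fun i : Fin m => l.get (Fin.cast hl.symm i)))) := by rw [h]
    _ ≤ levelMax u v m :=
        Finset.le_sup (f := fun w : Fin m → Bool => matMax (wordProd u v (List.ofFn w)))
          (Finset.mem_univ _)

lemma le_matMax (M : Matrix (Fin 2) (Fin 2) ℕ) (i j : Fin 2) : M i j ≤ matMax M := by
  unfold matMax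
  fin_cases i <;> fin_cases j
  · exact le_max_of_le_left (le_max_left _ _)
  · exact le_max_of_le_left (le_max_right _ _)
  · exact le_max_of_le_right (le_max_left _ _)
  · exact le_max_of_le_right (le_max_right _ _)

theorem stmt4 (u v : ℕ) (hv : 1 ≤ v) (huv : v ≤ u) (n : ℕ) :
    (2 ≤ v → levelMax u v (2 * n + 2) = ((Rm v * Lm u) ^ (n + 1)) 0 0) ∧
    (v = 1 → levelMax u 1 (2 * n + 2) = (Lm u * (Lm u * Rm 1) ^ n * Lm u) 1 0) := by
  constructor
  · -- case v ≥ 2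
    intro hv2
    have hval : ((Rm v * Lm u) ^ (n + 1)) 0 0 = xx u v (n+1) := by
      rw [RL_pow]
      simp
    apply le_antisymm
    · calc levelMax u v (2*n+2) ≤ fA u v (2*n+2) := levelMax_le hv huv _ (by omega)
        _ = fA u v (2*(n+1)) := by ring_nf
        _ = xx u v (n+1) := (cf2 hv2 huv (n+1)).1
        _ = _ := hval.symm
    · calc ((Rm v * Lm u) ^ (n + 1)) 0 0
          = wordProd u v (altL (n+1)) 0 0 := by rw [altL_prod]
        _ ≤ matMax (wordProd u v (altL (n+1))) := le_matMax _ 0 0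
        _ ≤ levelMax u v (2*n+2) := levelMax_ge u v _ _ (by rw [altL_length]; ring)
  · -- case v = 1
    rintro rfl
    have hu : 1 ≤ u := huv
    have hcomm : Lm u * (Lm u * Rm 1) ^ n * Lm u = Lm u * (Lm u * (Rm 1 * Lm u) ^ n) := by
      rw [mul_assoc, pow_shift]
    have hval : (Lm u * (Lm u * Rm 1) ^ n * Lm u) 1 0 = u * (xx u 1 n + ss u 1 n) := by
      rw [hcomm, Lm_mul_apply_one, Lm_mul_apply_one, Lm_mul_apply_zero]
      cases n with
      | zero => simp [xx_zero, ss_zero]; ring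
      | succ k =>
        rw [RL_pow]
        simp
        rw [ss_succ]
        ring
    apply le_antisymm
    · calc levelMax u 1 (2*n+2) ≤ fA u 1 (2*n+2) := levelMax_le le_rfl hu _ (by omega)
        _ = u * (xx u 1 n + ss u 1 n) := (cf1 hu n).2.1
        _ = _ := hval.symm
    · calc (Lm u * (Lm u * Rm 1) ^ n * Lm u) 1 0
          = wordProd u 1 (false :: false :: altL n) 1 0 := by
            rw [wordProd_cons, wordProd_cons, altL_prod, hcomm]
            norm_num
        _ ≤ matMax (wordProd u 1 (false :: false :: altL n)) := le_matMax _ 1 0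
        _ ≤ levelMax u 1 (2*n+2) := levelMax_ge u 1 _ _ (by simp [altL_length])
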